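/- Let X be a compact metric space, S a nonempty index set, and for each s ∈ S let h_s, g_s : X → ℝ be continuous. For a Borel probability measure μ on X define J(μ) := sup{ (∫ h_s dμ)² / ∫ g_s² dμ : s ∈ S with ∫ g_s² dμ ≠ 0 }, with J(μ) := 0 if no s is admissible (values in [0,∞]). Let 𝓕 be a nonempty set of Borel probability measures on X that is closed under weak convergence. Then J attains its minimum on 𝓕: there exists μ₀ ∈ 𝓕 with J(μ₀) = inf{ J(μ) : μ ∈ 𝓕 }. -/

import Mathlib

open MeasureTheory Filter Topology
open scoped ENNReal NNReal

noncomputable section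

section AuxiliaryProkhorov

open BoundedContinuousFunction TopologicalSpace

lemma nnreal_sum_min (a δ : ℝ≥0) : ∀ N : ℕ, ∑ i ∈ Finset.range N, min δ (a - (i : ℝ≥0) * δ) = min a ((N : ℝ≥0) * δ) := by
  intro N
  induction N with
  | zero => simp
  | succ N ih =>
    rw [Finset.sum_range_succ, ih]
    rcases le_total a ((N : ℝ≥0) * δ) with h | h
    · have h1 : a - (N : ℝ≥0) * δ = 0 := tsub_eq_zero_of_le h
      have h2 : a ≤ ((N + 1 : ℕ) : ℝ≥0) * δ := by
        refine le_trans h ?_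
        push_cast
        exact mul_le_mul_of_nonneg_right (by simp) zero_le
      rw [h1, min_eq_left h, min_eq_left h2]
      simp
    · have h1 : min a ((N : ℝ≥0) * δ) = (N : ℝ≥0) * δ := min_eq_right h
      rw [h1, ← min_add_add_left, add_tsub_cancel_of_le h, min_comm]
      congr 1
      push_cast
      ring


variable {X : Type*} [MetricSpace X] [CompactSpace X] [MeasurableSpace X] [BorelSpace X]

omit [MeasurableSpace X] [BorelSpace X] in
lemma aux_sep : TopologicalSpace.SeparableSpace (X →ᵇ ℝ≥0) := by
  have e := ContinuousMap.isometryEquivBoundedOfCompact X ℝ≥0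
  exact e.toHomeomorph.surjective.denseRange.separableSpace e.toHomeomorph.continuous

lemma exists_subseq_lintegral_tendsto (μs : ℕ → ProbabilityMeasure X) :
    ∃ φ : ℕ → ℕ, StrictMono φ ∧ ∃ Λ : (X →ᵇ ℝ≥0) → ℝ≥0∞,
      ∀ f : X →ᵇ ℝ≥0, Tendsto (fun n => ∫⁻ x, f x ∂(μs (φ n) : Measure X)) atTop (𝓝 (Λ f)) := by
  have _ : TopologicalSpace.SeparableSpace (X →ᵇ ℝ≥0) := aux_sep
  set u : ℕ → (X →ᵇ ℝ≥0) := TopologicalSpace.denseSeq (X →ᵇ ℝ≥0) with hu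
  have hdense : DenseRange u := TopologicalSpace.denseRange_denseSeq _
  obtain ⟨c, φ, hφ, hc⟩ := CompactSpace.tendsto_subseq
    (X := ℕ → ℝ≥0∞) (fun n k => ∫⁻ x, u k x ∂(μs n : Measure X))
  have hck : ∀ k, Tendsto (fun n => ∫⁻ x, u k x ∂(μs (φ n) : Measure X)) atTop (𝓝 (c k)) := by
    intro k
    have := tendsto_pi_nhds.mp hc k
    simpa using this
  refine ⟨φ, hφ, fun f => Filter.limsup (fun n => ∫⁻ x, f x ∂(μs (φ n) : Measure X)) atTop, ?_⟩
  intro f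
  set a : ℕ → ℝ≥0∞ := fun n => ∫⁻ x, f x ∂(μs (φ n) : Measure X) with ha
  have key : Filter.limsup a atTop ≤ Filter.liminf a atTop := by
    refine ENNReal.le_of_forall_pos_le_add (fun ε hε hlt => ?_)
    obtain ⟨k, hk⟩ : ∃ k, dist f (u k) < (ε : ℝ) / 2 := by
      have hpos : (0 : ℝ) < (ε : ℝ) / 2 := by positivity
      exact hdense.exists_dist_lt f hpos
    have hfu : ∀ x, f x ≤ u k x + ε / 2 := by
      intro x
      have h1 : dist (f x) (u k x) ≤ dist f (u k) := BoundedContinuousFunction.dist_coe_le_dist x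
      have h2 : dist (f x) (u k x) < (ε : ℝ) / 2 := lt_of_le_of_lt h1 hk
      have h3 := abs_lt.mp (by simpa [NNReal.dist_eq] using h2)
      have h4 : (f x : ℝ) ≤ ((u k x + ε / 2 : ℝ≥0) : ℝ) := by push_cast; linarith [h3.2]
      exact_mod_cast h4
    have hub : ∀ x, u k x ≤ f x + ε / 2 := by
      intro x
      have h1 : dist (f x) (u k x) ≤ dist f (u k) := BoundedContinuousFunction.dist_coe_le_dist x
      have h2 : dist (f x) (u k x) < (ε : ℝ) / 2 := lt_of_le_of_lt h1 hk
      have h3 := abs_lt.mp (by simpa [NNReal.dist_eq] using h2)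
      have h4 : (u k x : ℝ) ≤ ((f x + ε / 2 : ℝ≥0) : ℝ) := by push_cast; linarith [h3.1]
      exact_mod_cast h4
    have hint1 : ∀ n, a n ≤ (∫⁻ x, u k x ∂(μs (φ n) : Measure X)) + (ε / 2 : ℝ≥0) := by
      intro n
      calc a n ≤ ∫⁻ x, ((u k x : ℝ≥0∞) + ((ε / 2 : ℝ≥0) : ℝ≥0∞)) ∂(μs (φ n) : Measure X) := by
              apply lintegral_mono
              intro x
              show ((f x : ℝ≥0) : ℝ≥0∞) ≤ (u k x : ℝ≥0∞) + ((ε / 2 : ℝ≥0) : ℝ≥0∞)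
              rw [← ENNReal.coe_add]
              exact ENNReal.coe_le_coe.mpr (hfu x)
        _ = (∫⁻ x, u k x ∂(μs (φ n) : Measure X)) + (ε / 2 : ℝ≥0) := by
              rw [lintegral_add_right _ measurable_const, lintegral_const]
              simp
    have hint2 : ∀ n, (∫⁻ x, u k x ∂(μs (φ n) : Measure X)) ≤ a n + (ε / 2 : ℝ≥0) := by
      intro n
      calc (∫⁻ x, u k x ∂(μs (φ n) : Measure X))
          ≤ ∫⁻ x, ((f x : ℝ≥0∞) + ((ε / 2 : ℝ≥0) : ℝ≥0∞)) ∂(μs (φ n) : Measure X) := by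
              apply lintegral_mono
              intro x
              show ((u k x : ℝ≥0) : ℝ≥0∞) ≤ (f x : ℝ≥0∞) + ((ε / 2 : ℝ≥0) : ℝ≥0∞)
              rw [← ENNReal.coe_add]
              exact ENNReal.coe_le_coe.mpr (hub x)
        _ = a n + (ε / 2 : ℝ≥0) := by
              rw [lintegral_add_right _ measurable_const, lintegral_const]
              simp
              rfl
    have h1 : Filter.limsup a atTop ≤ c k + (ε / 2 : ℝ≥0) := by
      have htend : Tendsto (fun n => (∫⁻ x, u k x ∂(μs (φ n) : Measure X)) + ((ε / 2 : ℝ≥0) : ℝ≥0∞))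
          atTop (𝓝 (c k + (ε / 2 : ℝ≥0))) := (hck k).add tendsto_const_nhds
      calc Filter.limsup a atTop
          ≤ Filter.limsup (fun n => (∫⁻ x, u k x ∂(μs (φ n) : Measure X)) + ((ε / 2 : ℝ≥0) : ℝ≥0∞)) atTop :=
            Filter.limsup_le_limsup (Eventually.of_forall hint1)
        _ = c k + (ε / 2 : ℝ≥0) := htend.limsup_eq
    have h2 : c k - (ε / 2 : ℝ≥0) ≤ Filter.liminf a atTop := by
      have htend : Tendsto (fun n => (∫⁻ x, u k x ∂(μs (φ n) : Measure X)) - ((ε / 2 : ℝ≥0) : ℝ≥0∞))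
          atTop (𝓝 (c k - (ε / 2 : ℝ≥0))) :=
        ENNReal.Tendsto.sub (hck k) tendsto_const_nhds (Or.inr ENNReal.coe_ne_top)
      calc c k - (ε / 2 : ℝ≥0)
          = Filter.liminf (fun n => (∫⁻ x, u k x ∂(μs (φ n) : Measure X)) - ((ε / 2 : ℝ≥0) : ℝ≥0∞)) atTop :=
            htend.liminf_eq.symm
        _ ≤ Filter.liminf a atTop :=
            Filter.liminf_le_liminf (Eventually.of_forall (fun n => tsub_le_iff_right.mpr (hint2 n)))
    calc Filter.limsup a atTop ≤ c k + (ε / 2 : ℝ≥0) := h1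
      _ ≤ ((c k - (ε / 2 : ℝ≥0)) + (ε / 2 : ℝ≥0)) + (ε / 2 : ℝ≥0) := add_le_add_left le_tsub_add _
      _ ≤ (Filter.liminf a atTop + (ε / 2 : ℝ≥0)) + (ε / 2 : ℝ≥0) := by
          exact add_le_add_left (add_le_add_left h2 _) _
      _ = Filter.liminf a atTop + ε := by
          rw [add_assoc, ← ENNReal.coe_add]
          congr 2
          exact add_halves ε
  exact tendsto_of_liminf_eq_limsup (le_antisymm liminf_le_limsup key) rfl


lemma probmeasure_exists_tendsto_subseq (μs : ℕ → ProbabilityMeasure X) :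
    ∃ (ν : ProbabilityMeasure X) (φ : ℕ → ℕ), StrictMono φ ∧
      Tendsto (fun n => μs (φ n)) atTop (𝓝 ν) := by
  obtain ⟨φ, hφ, Λ, hΛ⟩ := exists_subseq_lintegral_tendsto μs
  -- Λ is finite
  have hfin : ∀ f : X →ᵇ ℝ≥0, Λ f ≠ ∞ := by
    intro f
    have hb : ∀ n, (∫⁻ x, f x ∂(μs (φ n) : Measure X)) ≤ (nndist 0 f : ℝ≥0∞) := by
      intro n
      calc ∫⁻ x, f x ∂(μs (φ n) : Measure X)
          ≤ ∫⁻ _, (nndist 0 f : ℝ≥0∞) ∂(μs (φ n) : Measure X) :=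
            lintegral_mono fun x => ENNReal.coe_le_coe.mpr (f.apply_le_nndist_zero x)
        _ = (nndist 0 f : ℝ≥0∞) := by simp
    exact ne_top_of_le_ne_top ENNReal.coe_ne_top (le_of_tendsto (hΛ f) (Eventually.of_forall hb))
  have hΛ1 : Λ 1 = 1 := by
    refine tendsto_nhds_unique (hΛ 1) ?_
    have h : ∀ n, (∫⁻ x, ((1 : X →ᵇ ℝ≥0) x : ℝ≥0∞) ∂(μs (φ n) : Measure X)) = 1 := fun n => by simp
    simp only [h]
    exact tendsto_const_nhds
  have hadd : ∀ f g : X →ᵇ ℝ≥0, Λ (f + g) = Λ f + Λ g := by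
    intro f g
    refine tendsto_nhds_unique (hΛ (f + g)) ?_
    have h : ∀ n, (∫⁻ x, ((f + g) x : ℝ≥0∞) ∂(μs (φ n) : Measure X))
        = (∫⁻ x, f x ∂(μs (φ n) : Measure X)) + ∫⁻ x, g x ∂(μs (φ n) : Measure X) := by
      intro n
      have : ∀ x, ((f + g) x : ℝ≥0∞) = (f x : ℝ≥0∞) + (g x : ℝ≥0∞) := by
        intro x; simp
      simp only [this]
      exact lintegral_add_left f.measurable_coe_ennreal_comp _
    simp only [h]
    exact (hΛ f).add (hΛ g)
  have hsmul : ∀ (c : ℝ≥0) (f : X →ᵇ ℝ≥0), Λ (c • f) = c * Λ f := by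
    intro c f
    refine tendsto_nhds_unique (hΛ (c • f)) ?_
    have h : ∀ n, (∫⁻ x, ((c • f) x : ℝ≥0∞) ∂(μs (φ n) : Measure X))
        = (c : ℝ≥0∞) * ∫⁻ x, f x ∂(μs (φ n) : Measure X) := by
      intro n
      have : ∀ x, ((c • f) x : ℝ≥0∞) = (c : ℝ≥0∞) * (f x : ℝ≥0∞) := by
        intro x; simp [BoundedContinuousFunction.coe_smul]
      simp only [this]
      exact lintegral_const_mul _ f.measurable_coe_ennreal_comp
    simp only [h]
    exact ENNReal.Tendsto.const_mul (hΛ f) (Or.inr ENNReal.coe_ne_top)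
  have hmono : ∀ f g : X →ᵇ ℝ≥0, (∀ x, f x ≤ g x) → Λ f ≤ Λ g := by
    intro f g hfg
    refine le_of_tendsto_of_tendsto (hΛ f) (hΛ g) (Eventually.of_forall fun n => ?_)
    exact lintegral_mono fun x => ENNReal.coe_le_coe.mpr (hfg x)
  have hsum : ∀ (N : ℕ) (F : ℕ → (X →ᵇ ℝ≥0)),
      Λ (∑ i ∈ Finset.range N, F i) = ∑ i ∈ Finset.range N, Λ (F i) := by
    intro N F
    induction N with
    | zero =>
        simp only [Finset.range_zero, Finset.sum_empty]
        refine tendsto_nhds_unique (hΛ 0) ?_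
        have h : ∀ n, (∫⁻ x, ((0 : X →ᵇ ℝ≥0) x : ℝ≥0∞) ∂(μs (φ n) : Measure X)) = 0 := fun n => by simp
        simp only [h]
        exact tendsto_const_nhds
    | succ N ih =>
        rw [Finset.sum_range_succ, Finset.sum_range_succ, hadd, ih]
  -- the linear functional with values in ℝ≥0
  set Λ' : (X →ᵇ ℝ≥0) →ₗ[ℝ≥0] ℝ≥0 :=
    { toFun := fun f => (Λ f).toNNReal
      map_add' := fun f g => by
        show (Λ (f + g)).toNNReal = (Λ f).toNNReal + (Λ g).toNNReal
        rw [hadd]; exact ENNReal.toNNReal_add (hfin f) (hfin g)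
      map_smul' := fun c f => by
        show (Λ (c • f)).toNNReal = c • (Λ f).toNNReal
        rw [smul_eq_mul, hsmul, ENNReal.toNNReal_mul, ENNReal.toNNReal_coe] }
    with hΛ'def
  have hΛ'coe : ∀ f, ((Λ' f : ℝ≥0) : ℝ≥0∞) = Λ f := fun f => ENNReal.coe_toNNReal (hfin f)
  have hΛ'mono : ∀ f g : X →ᵇ ℝ≥0, (∀ x, f x ≤ g x) → Λ' f ≤ Λ' g := by
    intro f g hfg
    have := hmono f g hfg
    rwa [← hΛ'coe f, ← hΛ'coe g, ENNReal.coe_le_coe] at this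
  have hΛ'1 : Λ' (1 : X →ᵇ ℝ≥0) = 1 := by
    show (Λ 1).toNNReal = 1
    rw [hΛ1]; rfl
  set Λc : CompactlySupportedContinuousMap X ℝ≥0 →ₗ[ℝ≥0] ℝ≥0 :=
    { toFun := fun f => Λ' f.toBoundedContinuousFunction
      map_add' := fun f g => by rw [← map_add]; rfl
      map_smul' := fun c f => by rw [RingHom.id_apply, ← map_smul]; rfl }
    with hΛcdef
  -- the content
  set C : Content X :=
    { toFun := rieszContentAux Λc
      mono' := fun K₁ K₂ h => rieszContentAux_mono Λc h
      sup_le' := fun K₁ K₂ => rieszContentAux_sup_le Λc K₁ K₂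
      sup_disjoint' := by
        intro K₁ K₂ hdisj _ _
        refine le_antisymm (rieszContentAux_sup_le Λc K₁ K₂) ?_
        refine le_csInf (rieszContentAux_image_nonempty Λc (K₁ ⊔ K₂)) ?_
        rintro b ⟨f, hf, rfl⟩
        obtain ⟨w, hw₁, hw₂, hw01⟩ := exists_continuous_zero_one_of_isClosed
          K₁.isCompact.isClosed K₂.isCompact.isClosed hdisj
        set ψ₁ : C(X, ℝ≥0) := ⟨fun x => Real.toNNReal (1 - w x),
          continuous_real_toNNReal.comp (continuous_const.sub w.continuous)⟩ with hψ₁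
        set ψ₂ : C(X, ℝ≥0) := ⟨fun x => Real.toNNReal (w x),
          continuous_real_toNNReal.comp w.continuous⟩ with hψ₂
        set cf : C(X, ℝ≥0) := ⟨fun x => f x, f.continuous⟩ with hcf
        set g₁ : X →ᵇ ℝ≥0 := mkOfCompact (cf * ψ₁) with hg₁
        set g₂ : X →ᵇ ℝ≥0 := mkOfCompact (cf * ψ₂) with hg₂
        have hsum12 : g₁ + g₂ = f.toBoundedContinuousFunction := by
          ext x
          have hx01 := hw01 x
          have h1 : ψ₁ x + ψ₂ x = 1 := by
            have e1 : ((ψ₁ x : ℝ≥0) : ℝ) = 1 - w x := Real.coe_toNNReal _ (by linarith [hx01.2])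
            have e2 : ((ψ₂ x : ℝ≥0) : ℝ) = w x := Real.coe_toNNReal _ hx01.1
            have : ((ψ₁ x + ψ₂ x : ℝ≥0) : ℝ) = 1 := by push_cast [e1, e2]; ring
            exact_mod_cast this
          have e1 : g₁ x = f x * ψ₁ x := rfl
          have e2 : g₂ x = f x * ψ₂ x := rfl
          have hx : (g₁ + g₂) x = f x := by
            rw [BoundedContinuousFunction.add_apply, e1, e2, ← mul_add, h1, mul_one]
          exact_mod_cast hx
        have hK₁ : ∀ x ∈ K₁, 1 ≤ g₁ x := by
          intro x hx
          have : ψ₁ x = 1 := by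
            have := hw₁ hx
            simp only [hψ₁, ContinuousMap.coe_mk]
            rw [show w x = 0 from this]
            norm_num
          have e1 : g₁ x = f x * ψ₁ x := rfl
          rw [e1, this, mul_one]
          exact hf x (Set.mem_union_left _ hx)
        have hK₂ : ∀ x ∈ K₂, 1 ≤ g₂ x := by
          intro x hx
          have : ψ₂ x = 1 := by
            have := hw₂ hx
            simp only [hψ₂, ContinuousMap.coe_mk]
            rw [show w x = 1 from this]
            norm_num
          have e2 : g₂ x = f x * ψ₂ x := rfl
          rw [e2, this, mul_one]
          exact hf x (Set.mem_union_right _ hx)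
        calc rieszContentAux Λc K₁ + rieszContentAux Λc K₂
            ≤ Λ' g₁ + Λ' g₂ := add_le_add (rieszContentAux_le Λc (f := CompactlySupportedContinuousMap.continuousMapEquiv g₁.toContinuousMap) hK₁) (rieszContentAux_le Λc (f := CompactlySupportedContinuousMap.continuousMapEquiv g₂.toContinuousMap) hK₂)
          _ = Λ' (g₁ + g₂) := (map_add Λ' g₁ g₂).symm
          _ = Λ' f.toBoundedContinuousFunction := by rw [hsum12] }
    with hCdef
  set ν : Measure X := C.measure with hν
  have hCuniv : (rieszContentAux Λc ⟨Set.univ, isCompact_univ⟩ : ℝ≥0) = 1 := by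
    refine le_antisymm ?_ ?_
    · refine csInf_le (OrderBot.bddBelow _) ?_
      exact ⟨CompactlySupportedContinuousMap.continuousMapEquiv 1, fun x _ => le_refl _, hΛ'1⟩
    · refine le_csInf (rieszContentAux_image_nonempty Λc _) ?_
      rintro b ⟨f, hf, rfl⟩
      calc (1:ℝ≥0) = Λ' 1 := hΛ'1.symm
        _ ≤ Λc f := hΛ'mono _ f.toBoundedContinuousFunction (fun x => by simpa using hf x (Set.mem_univ x))
  have hνuniv : ν Set.univ = 1 := by
    rw [hν, C.measure_apply MeasurableSet.univ, C.outerMeasure_of_isOpen Set.univ isOpen_univ,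
      C.innerContent_of_isCompact isCompact_univ isOpen_univ]
    show ((rieszContentAux Λc ⟨Set.univ, isCompact_univ⟩ : ℝ≥0) : ℝ≥0∞) = 1
    rw [hCuniv]
    rfl
  have hΛconst : ∀ c : ℝ≥0, Λ (const X c) = c := by
    intro c
    refine tendsto_nhds_unique (hΛ (const X c)) ?_
    have h : ∀ n, (∫⁻ x, ((const X c) x : ℝ≥0∞) ∂(μs (φ n) : Measure X)) = c := fun n => by simp
    simp only [h]
    exact tendsto_const_nhds
  have claim1 : ∀ f : X →ᵇ ℝ≥0, (∫⁻ x, f x ∂ν) ≤ Λ f := by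
    intro f
    refine ENNReal.le_of_forall_pos_le_add (fun δ hδ _ => ?_)
    set M : ℝ≥0 := nndist 0 f with hM
    have hfM : ∀ x, f x ≤ M := fun x => f.apply_le_nndist_zero x
    set N : ℕ := ⌈(M / δ : ℝ≥0)⌉₊ + 1 with hN
    have hδ0 : δ ≠ 0 := hδ.ne'
    have hNδ : M + δ ≤ (N:ℝ≥0) * δ := by
      have h1 : (M / δ : ℝ≥0) ≤ (⌈(M / δ : ℝ≥0)⌉₊ : ℝ≥0) := Nat.le_ceil _
      have h2 : M ≤ (⌈(M / δ : ℝ≥0)⌉₊ : ℝ≥0) * δ := by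
        rw [← div_le_iff₀ (pos_iff_ne_zero.mpr hδ0)]
        exact h1
      calc M + δ ≤ (⌈(M / δ : ℝ≥0)⌉₊ : ℝ≥0) * δ + δ := add_le_add_left h2 δ
        _ = (N:ℝ≥0) * δ := by rw [hN]; push_cast; ring
    set U : ℕ → Set X := fun i => {x | (i:ℝ≥0) * δ < f x} with hU
    have hUopen : ∀ i, IsOpen (U i) := fun i => isOpen_lt continuous_const f.continuous
    have hgc : ∀ i : ℕ, Continuous fun x => min 1 ((f x + δ - (i:ℝ≥0) * δ) * δ⁻¹) := by
      intro i
      exact continuous_const.min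
        (((f.continuous.add continuous_const).sub continuous_const).mul continuous_const)
    set g : ℕ → (X →ᵇ ℝ≥0) :=
      fun i => mkOfCompact ⟨fun x => min 1 ((f x + δ - (i:ℝ≥0) * δ) * δ⁻¹), hgc i⟩ with hg
    have hg_apply : ∀ i x, g i x = min 1 ((f x + δ - (i:ℝ≥0) * δ) * δ⁻¹) := fun i x => rfl
    have hgK : ∀ i x, x ∈ U i → 1 ≤ g i x := by
      intro i x hx
      rw [hg_apply]
      refine le_min le_rfl ?_
      have h1 : δ ≤ f x + δ - (i:ℝ≥0) * δ := by
        refine le_tsub_of_add_le_right ?_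
        rw [add_comm δ ((i:ℝ≥0) * δ)]
        exact add_le_add_left (le_of_lt hx) δ
      calc (1:ℝ≥0) = δ * δ⁻¹ := (mul_inv_cancel₀ hδ0).symm
        _ ≤ (f x + δ - (i:ℝ≥0) * δ) * δ⁻¹ := mul_le_mul_left h1 δ⁻¹
    have hνU : ∀ i, ν (U i) ≤ Λ (g i) := by
      intro i
      rw [hν, C.measure_apply (hUopen i).measurableSet, C.outerMeasure_of_isOpen _ (hUopen i)]
      refine iSup₂_le fun K hK => ?_
      rw [← hΛ'coe (g i)]
      exact ENNReal.coe_le_coe.mpr (rieszContentAux_le Λc (f := CompactlySupportedContinuousMap.continuousMapEquiv (g i).toContinuousMap) (fun x hx => hgK i x (hK hx)))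
    have hpt : ∀ x, (f x : ℝ≥0∞) ≤ ∑ i ∈ Finset.range N, (U i).indicator (fun _ => (δ:ℝ≥0∞)) x := by
      intro x
      have h0 : f x = ∑ i ∈ Finset.range N, min δ (f x - (i:ℝ≥0) * δ) := by
        rw [nnreal_sum_min]
        exact (min_eq_left (le_trans (hfM x) (le_trans le_self_add hNδ))).symm
      calc (f x : ℝ≥0∞) = ((∑ i ∈ Finset.range N, min δ (f x - (i:ℝ≥0) * δ) : ℝ≥0) : ℝ≥0∞) := by
            exact congrArg (fun t : ℝ≥0 => (t : ℝ≥0∞)) h0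
        _ = ∑ i ∈ Finset.range N, ((min δ (f x - (i:ℝ≥0) * δ) : ℝ≥0) : ℝ≥0∞) := by
            exact ENNReal.coe_finset_sum _ _
        _ ≤ ∑ i ∈ Finset.range N, (U i).indicator (fun _ => (δ:ℝ≥0∞)) x := by
            refine Finset.sum_le_sum fun i _ => ?_
            by_cases hx : x ∈ U i
            · rw [Set.indicator_of_mem hx]
              exact ENNReal.coe_le_coe.mpr (min_le_left _ _)
            · rw [Set.indicator_of_notMem hx]
              have hle : f x ≤ (i:ℝ≥0) * δ := not_lt.mp hx
              rw [tsub_eq_zero_of_le hle, min_eq_right zero_le]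
              simp
    have hδg : ∀ i x, (δ • g i) x = min δ (f x + δ - (i:ℝ≥0) * δ) := by
      intro i x
      rw [BoundedContinuousFunction.coe_smul]
      show δ • (g i x) = _
      rw [smul_eq_mul, hg_apply]
      have hmin : δ * min 1 ((f x + δ - (i:ℝ≥0) * δ) * δ⁻¹)
          = min (δ * 1) (δ * ((f x + δ - (i:ℝ≥0) * δ) * δ⁻¹)) :=
        Monotone.map_min (fun a b hab => mul_le_mul_right hab δ)
      rw [hmin, mul_one, mul_comm, mul_assoc, inv_mul_cancel₀ hδ0, mul_one]
    have hGsum : (∑ i ∈ Finset.range N, δ • g i) = f + const X δ := by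
      ext x
      have hx : (∑ i ∈ Finset.range N, δ • g i) x = f x + δ := by
        rw [BoundedContinuousFunction.coe_sum, Finset.sum_apply]
        calc ∑ i ∈ Finset.range N, (δ • g i) x
            = ∑ i ∈ Finset.range N, min δ ((f x + δ) - (i:ℝ≥0) * δ) := by
              refine Finset.sum_congr rfl fun i _ => hδg i x
          _ = min (f x + δ) ((N:ℝ≥0) * δ) := nnreal_sum_min _ _ _
          _ = f x + δ := min_eq_left (le_trans (add_le_add_left (hfM x) δ) hNδ)
      exact_mod_cast hx
    calc (∫⁻ x, f x ∂ν)
        ≤ ∫⁻ x, ∑ i ∈ Finset.range N, (U i).indicator (fun _ => (δ:ℝ≥0∞)) x ∂ν :=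
          lintegral_mono hpt
      _ = ∑ i ∈ Finset.range N, ∫⁻ x, (U i).indicator (fun _ => (δ:ℝ≥0∞)) x ∂ν :=
          lintegral_finset_sum _ (fun i _ => measurable_const.indicator (hUopen i).measurableSet)
      _ = ∑ i ∈ Finset.range N, (δ:ℝ≥0∞) * ν (U i) := by
          refine Finset.sum_congr rfl fun i _ => ?_
          exact lintegral_indicator_const (hUopen i).measurableSet _
      _ ≤ ∑ i ∈ Finset.range N, Λ (δ • g i) := by
          refine Finset.sum_le_sum fun i _ => ?_
          rw [hsmul]
          exact mul_le_mul_right (hνU i) _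
      _ = Λ (∑ i ∈ Finset.range N, δ • g i) := (hsum N _).symm
      _ = Λ (f + const X δ) := by rw [hGsum]
      _ = Λ f + δ := by rw [hadd, hΛconst]
  have hrep : ∀ f : X →ᵇ ℝ≥0, (∫⁻ x, f x ∂ν) = Λ f := by
    intro f
    refine le_antisymm (claim1 f) ?_
    set M : ℝ≥0 := nndist 0 f with hM
    have hfM : ∀ x, f x ≤ M := fun x => f.apply_le_nndist_zero x
    set g : X →ᵇ ℝ≥0 := mkOfCompact ⟨fun x => M - f x, continuous_const.sub f.continuous⟩ with hgdef
    have hg_apply : ∀ x, g x = M - f x := fun x => rfl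
    have hfg : f + g = const X M := by
      ext x
      have hx : (f + g) x = M := by
        rw [BoundedContinuousFunction.add_apply, hg_apply, add_tsub_cancel_of_le (hfM x)]
      exact_mod_cast hx
    have hint : (∫⁻ x, f x ∂ν) + (∫⁻ x, g x ∂ν) = (M : ℝ≥0∞) := by
      rw [← lintegral_add_left f.measurable_coe_ennreal_comp]
      have h : ∀ x, (f x : ℝ≥0∞) + (g x : ℝ≥0∞) = ((M : ℝ≥0) : ℝ≥0∞) := by
        intro x
        rw [← ENNReal.coe_add]
        congr 1
        have := congrArg (fun u : X →ᵇ ℝ≥0 => u x) hfg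
        simpa using this
      simp only [h]
      rw [lintegral_const, hνuniv, mul_one]
    have hΛfg : Λ f + Λ g = (M : ℝ≥0∞) := by rw [← hadd, hfg, hΛconst]
    have h2 : (∫⁻ x, g x ∂ν) ≤ Λ g := claim1 g
    have hgfin : (∫⁻ x, g x ∂ν) ≠ ∞ := ne_top_of_le_ne_top (hfin g) h2
    have h3 : Λ f + (∫⁻ x, g x ∂ν) ≤ (∫⁻ x, f x ∂ν) + (∫⁻ x, g x ∂ν) := by
      calc Λ f + (∫⁻ x, g x ∂ν) ≤ Λ f + Λ g := add_le_add_right h2 _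
        _ = (M : ℝ≥0∞) := hΛfg
        _ = (∫⁻ x, f x ∂ν) + (∫⁻ x, g x ∂ν) := hint.symm
    exact (ENNReal.add_le_add_iff_right hgfin).mp h3
  have hprob : IsProbabilityMeasure ν := ⟨hνuniv⟩
  refine ⟨(⟨ν, hprob⟩ : ProbabilityMeasure X), φ, hφ, ?_⟩
  apply ProbabilityMeasure.tendsto_iff_forall_lintegral_tendsto.mpr
  intro f
  show Tendsto (fun n => ∫⁻ x, f x ∂(μs (φ n) : Measure X)) atTop (𝓝 (∫⁻ x, f x ∂ν))
  rw [hrep f]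
  exact hΛ f


end AuxiliaryProkhorov

open BoundedContinuousFunction in
/-- The supremal Fisher-information-type functional
`J(μ) = sup_s (∫ h_s dμ)² / ∫ g_s² dμ` attains its minimum on any nonempty weakly
closed set of Borel probability measures on a compact metric space. -/
theorem fisher_type_functional_min_attained
    (X : Type*) [MetricSpace X] [CompactSpace X] [MeasurableSpace X] [BorelSpace X]
    (S : Type*) [Nonempty S] (h g : S → X → ℝ)
    (hcont : ∀ s, Continuous (h s)) (gcont : ∀ s, Continuous (g s))
    (J : ProbabilityMeasure X → ℝ≥0∞)
    (hJ : ∀ μ : ProbabilityMeasure X, J μ =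
      sSup {r : ℝ≥0∞ | ∃ s : S, (∫ x, (g s x) ^ 2 ∂(μ : Measure X)) ≠ 0 ∧
        r = ENNReal.ofReal ((∫ x, h s x ∂(μ : Measure X)) ^ 2
          / ∫ x, (g s x) ^ 2 ∂(μ : Measure X))})
    (𝓕 : Set (ProbabilityMeasure X)) (h𝓕 : 𝓕.Nonempty) (hcl : IsClosed 𝓕) :
    ∃ μ₀ ∈ 𝓕, J μ₀ = ⨅ μ ∈ 𝓕, J μ := by
  classical
  set I : ℝ≥0∞ := ⨅ μ ∈ 𝓕, J μ with hIdef
  have hIle : ∀ μ ∈ 𝓕, I ≤ J μ := fun μ hμ => iInf₂_le μ hμ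
  -- minimizing sequence
  have hseq : ∀ n : ℕ, ∃ μ ∈ 𝓕, J μ ≤ I + ((n : ℝ≥0∞))⁻¹ := by
    intro n
    rcases eq_or_ne ((n : ℝ≥0∞))⁻¹ ∞ with hn | hn
    · obtain ⟨μ, hμ⟩ := h𝓕
      exact ⟨μ, hμ, by rw [hn]; simp⟩
    · rcases eq_or_ne I ∞ with hI | hI
      · obtain ⟨μ, hμ⟩ := h𝓕
        exact ⟨μ, hμ, by rw [hI]; simp⟩
      · have hlt : I < I + ((n : ℝ≥0∞))⁻¹ := by
          refine ENNReal.lt_add_right hI ?_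
          simp
        obtain ⟨μ, hμ1⟩ := iInf_lt_iff.mp (lt_of_le_of_lt (le_refl I) hlt)
        obtain ⟨hμ𝓕, hμ2⟩ := iInf_lt_iff.mp hμ1
        exact ⟨μ, hμ𝓕, le_of_lt hμ2⟩
  choose m hm1 hm2 using hseq
  have hupper : Tendsto (fun n : ℕ => I + ((n : ℝ≥0∞))⁻¹) atTop (𝓝 I) := by
    have := (tendsto_const_nhds (x := I) (f := atTop (α := ℕ))).add ENNReal.tendsto_inv_nat_nhds_zero
    simpa using this
  have htendsto : Tendsto (fun n => J (m n)) atTop (𝓝 I) :=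
    tendsto_of_tendsto_of_tendsto_of_le_of_le tendsto_const_nhds hupper
      (fun n => hIle (m n) (hm1 n)) hm2
  obtain ⟨ν, ψ, hψ, hconv⟩ := probmeasure_exists_tendsto_subseq m
  have hν𝓕 : ν ∈ 𝓕 := hcl.mem_of_tendsto hconv (Eventually.of_forall fun n => hm1 (ψ n))
  have hJψ : Tendsto (fun n => J (m (ψ n))) atTop (𝓝 I) := htendsto.comp hψ.tendsto_atTop
  have hJν_le : J ν ≤ I := by
    rw [hJ ν]
    refine sSup_le ?_
    rintro r ⟨s, hs0, rfl⟩
    set hb : X →ᵇ ℝ := mkOfCompact ⟨h s, hcont s⟩ with hhb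
    set gb : X →ᵇ ℝ := mkOfCompact ⟨fun x => (g s x) ^ 2, (gcont s).pow 2⟩ with hgb
    have hA : Tendsto (fun n => ∫ x, h s x ∂(m (ψ n) : Measure X)) atTop
        (𝓝 (∫ x, h s x ∂(ν : Measure X))) := by
      have := (ProbabilityMeasure.tendsto_iff_forall_integral_tendsto.mp hconv) hb
      simpa [hhb] using this
    have hB : Tendsto (fun n => ∫ x, (g s x) ^ 2 ∂(m (ψ n) : Measure X)) atTop
        (𝓝 (∫ x, (g s x) ^ 2 ∂(ν : Measure X))) := by
      have := (ProbabilityMeasure.tendsto_iff_forall_integral_tendsto.mp hconv) gb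
      simpa [hgb] using this
    have hBpos : 0 < ∫ x, (g s x) ^ 2 ∂(ν : Measure X) := by
      rcases lt_or_eq_of_le (integral_nonneg (f := fun x => (g s x) ^ 2) (fun x => sq_nonneg (g s x))) with h1 | h1
      · exact h1
      · exact absurd h1.symm hs0
    have hev : ∀ᶠ n in atTop, 0 < ∫ x, (g s x) ^ 2 ∂(m (ψ n) : Measure X) :=
      hB.eventually (eventually_gt_nhds hBpos)
    have hR : Tendsto (fun n => (∫ x, h s x ∂(m (ψ n) : Measure X)) ^ 2
        / ∫ x, (g s x) ^ 2 ∂(m (ψ n) : Measure X)) atTop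
        (𝓝 ((∫ x, h s x ∂(ν : Measure X)) ^ 2 / ∫ x, (g s x) ^ 2 ∂(ν : Measure X))) :=
      (hA.pow 2).div hB (ne_of_gt hBpos)
    have hofReal := ENNReal.tendsto_ofReal hR
    refine le_of_tendsto_of_tendsto hofReal hJψ ?_
    filter_upwards [hev] with n hn
    rw [hJ (m (ψ n))]
    exact le_sSup ⟨s, ne_of_gt hn, rfl⟩
  exact ⟨ν, hν𝓕, le_antisymm hJν_le (hIle ν hν𝓕)⟩
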